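/- Let H be a real normed vector space, let R' > R > 0 and K_L > 1, let G : H → H be a map, and let W₀ ⊆ {u : ‖u‖ ≤ R} be a nonempty set such that the set W := ⋃_{m∈ℕ} G^m(W₀) is contained in {u : ‖u‖ ≤ R} and has compact closure. Then for every ε > 0 there exists β > 0 with 0 < β ≤ R' − R and the following property: for every map G_h : H → H and every nonempty set W₀ʰ ⊆ H satisfying (i) ‖G(w) − G_h(z)‖ ≤ K_L‖w − z‖ + β for all w, z with ‖w‖ ≤ R' and ‖z‖ ≤ R', and (ii) for every w ∈ W₀ there exists z ∈ W₀ʰ with ‖w − z‖ ≤ β, the set W_h := ⋃_{m∈ℕ} G_h^m(W₀ʰ) satisfies dist(W, W_h) ≤ ε, where dist(A, B) := sup_{a∈A} inf_{b∈B} ‖a − b‖ is the asymmetric Hausdorff semi-distance. -/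
import Mathlib

/-- Key iteration estimate: errors propagate as `β (m+1) KL^m` over `m ≤ N` steps,
provided the total error stays within `R' - R` so that the perturbed iterates remain
in the ball of radius `R'`. -/
lemma unstable_aux_iter {H : Type*} [NormedAddCommGroup H]
    (G Gh : H → H) (KL R R' β : ℝ) (hKL : 1 < KL) (hβ : 0 < β)
    (hG : ∀ w z : H, ‖w‖ ≤ R' → ‖z‖ ≤ R' → ‖G w - Gh z‖ ≤ KL * ‖w - z‖ + β)
    (hRR' : R ≤ R') (N : ℕ) (hbound : β * (N + 1) * KL ^ N ≤ R' - R)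
    (w z : H) (hiter : ∀ k : ℕ, ‖G^[k] w‖ ≤ R) (hwz : ‖w - z‖ ≤ β) :
    ∀ m : ℕ, m ≤ N → ‖G^[m] w - Gh^[m] z‖ ≤ β * (m + 1) * KL ^ m := by
  have hKL0 : (0:ℝ) < KL := lt_trans one_pos hKL
  intro m
  induction m with
  | zero => intro _; simpa using hwz
  | succ m ih =>
    intro hmN
    have hm : m ≤ N := Nat.le_of_succ_le hmN
    have hd := ih hm
    have hmono : β * (m + 1) * KL ^ m ≤ β * (N + 1) * KL ^ N := by
      gcongr <;> first
        | exact hβ.le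
        | exact hKL.le
        | exact_mod_cast Nat.succ_le_succ hm
    have hzn : ‖Gh^[m] z‖ ≤ R' := by
      have h1 : ‖Gh^[m] z‖ ≤ ‖G^[m] w‖ + ‖G^[m] w - Gh^[m] z‖ := by
        have := norm_sub_le (G^[m] w) (G^[m] w - Gh^[m] z)
        simpa using this
      have h2 : ‖G^[m] w - Gh^[m] z‖ ≤ R' - R := hd.trans (hmono.trans hbound)
      have := hiter m
      linarith
    rw [Function.iterate_succ_apply', Function.iterate_succ_apply']
    have hstep : ‖G (G^[m] w) - Gh (Gh^[m] z)‖ ≤ KL * ‖G^[m] w - Gh^[m] z‖ + β :=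
      hG _ _ ((hiter m).trans hRR') hzn
    have h1 : (1:ℝ) ≤ KL ^ (m + 1) := one_le_pow₀ hKL.le
    have h2 : KL * ‖G^[m] w - Gh^[m] z‖ ≤ KL * (β * (m + 1) * KL ^ m) := by
      gcongr
    calc ‖G (G^[m] w) - Gh (Gh^[m] z)‖ ≤ KL * (β * (m + 1) * KL ^ m) + β := by linarith
    _ ≤ β * (↑(m + 1) + 1) * KL ^ (m + 1) := by
        push_cast
        have heq : β * ((m:ℝ) + 1 + 1) * KL ^ (m + 1)
            = KL * (β * ((m:ℝ) + 1) * KL ^ m) + β * KL ^ (m + 1) := by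
          rw [pow_succ]; ring
        have hb : β * 1 ≤ β * KL ^ (m + 1) := by gcongr
        linarith

/-- Lower semi-continuity of global unstable sets: if
`W = ⋃ₘ Gᵐ(W₀)` is contained in the ball of radius `R < R'` and is relatively compact,
then for every `ε > 0` there is `β > 0` with `β ≤ R' − R` such that whenever `G_h` is
`β`-close to `G` in the Lipschitz-plus-error sense on the ball of radius `R'` and `W₀ʰ`
is `β`-close to `W₀`, every point of `W` lies within `ε` of `W_h = ⋃ₘ G_hᵐ(W₀ʰ)`. -/
theorem unstable_set_lower_semicontinuous
    {H : Type*} [NormedAddCommGroup H] [NormedSpace ℝ H]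
    (G : H → H) (R R' KL : ℝ) (hR : 0 < R) (hRR' : R < R') (hKL : 1 < KL)
    (W₀ : Set H) (hW₀ne : W₀.Nonempty) (hW₀ : W₀ ⊆ {u : H | ‖u‖ ≤ R})
    (hWsub : (⋃ m : ℕ, G^[m] '' W₀) ⊆ {u : H | ‖u‖ ≤ R})
    (hWcompact : IsCompact (closure (⋃ m : ℕ, G^[m] '' W₀))) :
    ∀ ε > 0, ∃ β > 0, β ≤ R' - R ∧
      ∀ (Gh : H → H) (W₀h : Set H), W₀h.Nonempty →
        (∀ w z : H, ‖w‖ ≤ R' → ‖z‖ ≤ R' → ‖G w - Gh z‖ ≤ KL * ‖w - z‖ + β) →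
        (∀ w ∈ W₀, ∃ z ∈ W₀h, ‖w - z‖ ≤ β) →
        ∀ u ∈ ⋃ m : ℕ, G^[m] '' W₀,
          Metric.infDist u (⋃ m : ℕ, Gh^[m] '' W₀h) ≤ ε := by
  intro ε hε
  have hKL0 : (0:ℝ) < KL := lt_trans one_pos hKL
  set S : Set H := ⋃ m : ℕ, G^[m] '' W₀ with hS
  -- finite ε/2-net of S, inside S
  have hTB : TotallyBounded S := hWcompact.totallyBounded.subset subset_closure
  obtain ⟨t, hts, htf, hcover⟩ := Metric.finite_approx_of_totallyBounded hTB (ε / 2) (by linarith)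
  -- each net point is a finite iterate
  have hex : ∀ p ∈ t, ∃ m : ℕ, p ∈ G^[m] '' W₀ := by
    intro p hp
    have := hts hp
    simpa [hS, Set.mem_iUnion] using this
  choose! f hf using hex
  set N : ℕ := htf.toFinset.sup f with hN
  have hfN : ∀ p ∈ t, f p ≤ N := fun p hp => Finset.le_sup (htf.mem_toFinset.2 hp)
  -- choose β
  have hnum : 0 < min (ε / 2) (R' - R) := lt_min (by linarith) (by linarith)
  have hden : (0:ℝ) < (N + 1) * KL ^ N := by positivity
  have hden1 : (1:ℝ) ≤ (N + 1) * KL ^ N := by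
    have h1 : (1:ℝ) ≤ (N:ℝ) + 1 := by linarith [(Nat.cast_nonneg N : (0:ℝ) ≤ N)]
    have h2 : (1:ℝ) ≤ KL ^ N := one_le_pow₀ hKL.le
    nlinarith
  set β : ℝ := min (ε / 2) (R' - R) / ((N + 1) * KL ^ N) with hβdef
  have hβ : 0 < β := div_pos hnum hden
  have hβmul : β * (N + 1) * KL ^ N = min (ε / 2) (R' - R) := by
    rw [hβdef, mul_assoc]
    exact div_mul_cancel₀ _ hden.ne'
  have hβbound : β * (N + 1) * KL ^ N ≤ R' - R := hβmul.le.trans (min_le_right _ _)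
  have hβle : β ≤ R' - R := by
    have : β * 1 ≤ β * ((N + 1) * KL ^ N) := by gcongr
    have := this.trans_eq (by rw [← mul_assoc, hβmul])
    calc β = β * 1 := (mul_one β).symm
    _ ≤ min (ε / 2) (R' - R) := this
    _ ≤ R' - R := min_le_right _ _
  refine ⟨β, hβ, hβle, ?_⟩
  intro Gh W₀h hW₀hne hG hclose u hu
  obtain ⟨p, hp, hup⟩ : ∃ p ∈ t, dist u p < ε / 2 := by
    have := hcover hu
    simpa [Set.mem_iUnion, Metric.mem_ball] using this
  obtain ⟨w, hw, hpw⟩ := hf p hp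
  obtain ⟨z, hz, hwz⟩ := hclose w hw
  have hiter : ∀ k : ℕ, ‖G^[k] w‖ ≤ R := fun k =>
    hWsub (Set.mem_iUnion.2 ⟨k, Set.mem_image_of_mem _ hw⟩)
  have hkey := unstable_aux_iter G Gh KL R R' β hKL hβ hG hRR'.le N hβbound w z hiter hwz
    (f p) (hfN p hp)
  have hmono : β * (f p + 1) * KL ^ (f p) ≤ β * (N + 1) * KL ^ N := by
    gcongr <;> first
      | exact hβ.le
      | exact hKL.le
      | exact hfN p hp
      | exact_mod_cast Nat.succ_le_succ (hfN p hp)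
  have hdist : ‖G^[f p] w - Gh^[f p] z‖ ≤ ε / 2 :=
    hkey.trans (hmono.trans (hβmul.le.trans (min_le_left _ _)))
  have hmem : Gh^[f p] z ∈ ⋃ m : ℕ, Gh^[m] '' W₀h :=
    Set.mem_iUnion.2 ⟨f p, Set.mem_image_of_mem _ hz⟩
  calc Metric.infDist u (⋃ m : ℕ, Gh^[m] '' W₀h) ≤ dist u (Gh^[f p] z) :=
    Metric.infDist_le_dist_of_mem hmem
  _ ≤ dist u p + dist p (Gh^[f p] z) := dist_triangle _ _ _
  _ ≤ ε / 2 + ε / 2 := by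
      refine add_le_add hup.le ?_
      rw [dist_eq_norm]
      calc ‖p - Gh^[f p] z‖ = ‖G^[f p] w - Gh^[f p] z‖ := by rw [hpw]
      _ ≤ ε / 2 := hdist
  _ = ε := by ring
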